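/- Let Λ be a finite set of unit vectors in ℝ³ with Λ = −Λ. For each ξ ∈ Λ let A_ξ ∈ ℝ³ be a unit vector with A_ξ·ξ = 0 and A_{−ξ} = A_ξ, and let B_ξ := (A_ξ + i ξ×A_ξ)/√2 be the associated Beltrami vectors. Let λ ∈ ℝ and let (a_ξ)_{ξ∈Λ} be complex coefficients with a_{−ξ} = conj(a_ξ) for all ξ ∈ Λ, and define W : ℝ³ → ℂ³ by W(x) := Σ_{ξ∈Λ} a_ξ B_ξ e^{iλ ξ·x} (which is ℝ³-valued). Then W is a stationary solution of the Euler equations: for every i ∈ {1,2,3} and x ∈ ℝ³, Σ_{j=1}^{3} ∂_j ( W_i W_j )(x) = ∂_i ( |W|²/2 )(x), where |W|² := Σ_{k=1}^{3} W_k². -/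

import Mathlib

/-- The Beltrami vector `B = (A + i ξ×A)/√2 ∈ ℂ³` associated with unit vectors
`ξ, A ∈ ℝ³` with `A·ξ = 0`. The cross product is extended ℂ-bilinearly to `ℂ³`. -/
noncomputable def beltrami (ξ A : Fin 3 → ℝ) : Fin 3 → ℂ :=
  fun k =>
    ((A k : ℂ) + Complex.I * crossProduct (fun j => (ξ j : ℂ)) (fun j => (A j : ℂ)) k) /
      (Real.sqrt 2 : ℂ)

/-- The partial derivative `∂_j f` of a complex-valued function on `ℝ³`. -/
noncomputable def pdC (j : Fin 3) (f : (Fin 3 → ℝ) → ℂ) (x : Fin 3 → ℝ) : ℂ :=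
  fderiv ℝ f x (Pi.single j 1)

section Aux

open Finset

lemma beltrami_eigen (ξ A : Fin 3 → ℝ) (hu : ∑ k, ξ k ^ 2 = 1) (hp : ∑ k, A k * ξ k = 0)
    (k : Fin 3) :
    crossProduct (fun j => (ξ j : ℂ)) (beltrami ξ A) k = -Complex.I * beltrami ξ A k := by
  have hu' : (ξ 0 : ℂ)^2 + (ξ 1 : ℂ)^2 + (ξ 2 : ℂ)^2 = 1 := by
    rw [Fin.sum_univ_three] at hu; norm_cast
  have hp' : (A 0 : ℂ) * ξ 0 + (A 1 : ℂ) * ξ 1 + (A 2 : ℂ) * ξ 2 = 0 := by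
    rw [Fin.sum_univ_three] at hp; norm_cast
  have hI : Complex.I ^ 2 = -1 := Complex.I_sq
  fin_cases k <;>
    [skip; skip; skip] <;>
    simp only [beltrami, crossProduct, LinearMap.mk₂_apply] <;>
    simp [Fin.isValue, Matrix.cons_val_zero, Matrix.cons_val_one] <;>
    field_simp
  · linear_combination Complex.I*ξ 0*hp' - Complex.I*A 0*hu' + (ξ 1*A 2 - ξ 2*A 1)*hI
  · linear_combination Complex.I*ξ 1*hp' - Complex.I*A 1*hu' + (ξ 2*A 0 - ξ 0*A 2)*hI
  · linear_combination Complex.I*ξ 2*hp' - Complex.I*A 2*hu' + (ξ 0*A 1 - ξ 1*A 0)*hI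

lemma beltrami_perp (ξ A : Fin 3 → ℝ) (hp : ∑ k, A k * ξ k = 0) :
    ∑ j, beltrami ξ A j * (ξ j : ℂ) = 0 := by
  have hp' : (A 0 : ℂ) * ξ 0 + (A 1 : ℂ) * ξ 1 + (A 2 : ℂ) * ξ 2 = 0 := by
    rw [Fin.sum_univ_three] at hp; norm_cast
  simp only [beltrami, crossProduct, LinearMap.mk₂_apply, Fin.sum_univ_three]
  simp [Fin.isValue]
  field_simp
  linear_combination hp'

lemma key_cross (ξ η b c : Fin 3 → ℂ)
    (hb : ∀ k, crossProduct ξ b k = -Complex.I * b k)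
    (hc : ∀ k, crossProduct η c k = -Complex.I * c k) (i : Fin 3) :
    b i * (∑ j, ξ j * c j) + c i * (∑ j, η j * b j)
      = (ξ i + η i) * (∑ k, b k * c k) := by
  simp only [crossProduct, LinearMap.mk₂_apply] at hb hc
  have hb0 := hb 0; have hb1 := hb 1; have hb2 := hb 2
  have hc0 := hc 0; have hc1 := hc 1; have hc2 := hc 2
  simp [Fin.isValue] at hb0 hb1 hb2 hc0 hc1 hc2
  fin_cases i <;> simp only [Fin.sum_univ_three, Fin.isValue, Fin.reduceFinMk, Fin.mk_zero, Fin.mk_one]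
  · linear_combination c 2 * hb1 - c 1 * hb2 + b 2 * hc1 - b 1 * hc2
  · linear_combination c 0 * hb2 - c 2 * hb0 + b 0 * hc2 - b 2 * hc0
  · linear_combination c 1 * hb0 - c 0 * hb1 + b 1 * hc0 - b 0 * hc1

lemma alg_key (Λ : Finset (Fin 3 → ℝ)) (a e : (Fin 3 → ℝ) → ℂ)
    (b : (Fin 3 → ℝ) → Fin 3 → ℂ) (c : ℂ)
    (hperp : ∀ ξ ∈ Λ, ∑ j, b ξ j * (ξ j : ℂ) = 0)
    (hkey : ∀ ξ ∈ Λ, ∀ η ∈ Λ, ∀ i : Fin 3,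
      b ξ i * (∑ j, (ξ j : ℂ) * b η j) + b η i * (∑ j, (η j : ℂ) * b ξ j)
        = ((ξ i : ℂ) + (η i : ℂ)) * ∑ k, b ξ k * b η k)
    (i : Fin 3) :
    ∑ j, ((∑ ξ ∈ Λ, a ξ * b ξ i * e ξ) * (∑ ξ ∈ Λ, a ξ * b ξ j * e ξ * (c * ξ j))
        + (∑ ξ ∈ Λ, a ξ * b ξ j * e ξ) * (∑ ξ ∈ Λ, a ξ * b ξ i * e ξ * (c * ξ j)))
    = ∑ k, (∑ ξ ∈ Λ, a ξ * b ξ k * e ξ) * (∑ ξ ∈ Λ, a ξ * b ξ k * e ξ * (c * ξ i)) := by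
  classical
  set F : (Fin 3 → ℝ) → (Fin 3 → ℝ) → ℂ :=
    fun ξ η => (a ξ * e ξ) * (a η * e η) * c * (b ξ i * ∑ j, (ξ j : ℂ) * b η j) with hF
  set G : (Fin 3 → ℝ) → (Fin 3 → ℝ) → ℂ :=
    fun ξ η => (a ξ * e ξ) * (a η * e η) * c * ((ξ i : ℂ) * ∑ k, b ξ k * b η k) with hG
  have hz : ∑ j, ∑ ξ ∈ Λ, a ξ * b ξ j * e ξ * (c * ξ j) = 0 := by
    rw [Finset.sum_comm]
    apply Finset.sum_eq_zero
    intro ξ hξ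
    have h1 : ∑ j, a ξ * b ξ j * e ξ * (c * ξ j)
        = (a ξ * e ξ * c) * ∑ j, b ξ j * (ξ j : ℂ) := by
      rw [Finset.mul_sum]; exact Finset.sum_congr rfl fun j _ => by ring
    rw [h1, hperp ξ hξ, mul_zero]
  have hLHS : ∑ j, ((∑ ξ ∈ Λ, a ξ * b ξ i * e ξ) * (∑ ξ ∈ Λ, a ξ * b ξ j * e ξ * (c * ξ j))
        + (∑ ξ ∈ Λ, a ξ * b ξ j * e ξ) * (∑ ξ ∈ Λ, a ξ * b ξ i * e ξ * (c * ξ j)))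
      = ∑ ξ ∈ Λ, ∑ η ∈ Λ, F ξ η := by
    rw [Finset.sum_add_distrib]
    have hz' : ∑ j, (∑ ξ ∈ Λ, a ξ * b ξ i * e ξ) * (∑ ξ ∈ Λ, a ξ * b ξ j * e ξ * (c * ξ j)) = 0 := by
      rw [← Finset.mul_sum, hz, mul_zero]
    rw [hz', zero_add]
    have : ∀ j : Fin 3, (∑ ξ ∈ Λ, a ξ * b ξ j * e ξ) * (∑ ξ ∈ Λ, a ξ * b ξ i * e ξ * (c * ξ j))
        = ∑ ξ ∈ Λ, ∑ η ∈ Λ, (a ξ * e ξ) * (a η * e η) * c * (b ξ i * ((ξ j : ℂ) * b η j)) := by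
      intro j
      rw [Finset.sum_mul_sum, Finset.sum_comm]
      exact Finset.sum_congr rfl fun ξ _ => Finset.sum_congr rfl fun η _ => by ring
    simp_rw [this]
    rw [Finset.sum_comm]
    refine Finset.sum_congr rfl fun ξ _ => ?_
    rw [Finset.sum_comm]
    refine Finset.sum_congr rfl fun η _ => ?_
    simp only [hF, Finset.mul_sum]
  have hRHS : ∑ k, (∑ ξ ∈ Λ, a ξ * b ξ k * e ξ) * (∑ ξ ∈ Λ, a ξ * b ξ k * e ξ * (c * ξ i))
      = ∑ ξ ∈ Λ, ∑ η ∈ Λ, G ξ η := by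
    have : ∀ k : Fin 3, (∑ ξ ∈ Λ, a ξ * b ξ k * e ξ) * (∑ ξ ∈ Λ, a ξ * b ξ k * e ξ * (c * ξ i))
        = ∑ ξ ∈ Λ, ∑ η ∈ Λ, (a ξ * e ξ) * (a η * e η) * c * ((ξ i : ℂ) * (b ξ k * b η k)) := by
      intro k
      rw [Finset.sum_mul_sum, Finset.sum_comm]
      exact Finset.sum_congr rfl fun ξ _ => Finset.sum_congr rfl fun η _ => by ring
    simp_rw [this]
    rw [Finset.sum_comm]
    refine Finset.sum_congr rfl fun ξ _ => ?_
    rw [Finset.sum_comm]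
    refine Finset.sum_congr rfl fun η _ => ?_
    simp only [hG, Finset.mul_sum]
  rw [hLHS, hRHS]
  have e1 : ∑ ξ ∈ Λ, ∑ η ∈ Λ, (F ξ η + F η ξ) = ∑ ξ ∈ Λ, ∑ η ∈ Λ, (G ξ η + G η ξ) := by
    refine Finset.sum_congr rfl fun ξ hξ => Finset.sum_congr rfl fun η hη => ?_
    have hk := hkey ξ hξ η hη i
    have hT : ∑ k, b η k * b ξ k = ∑ k, b ξ k * b η k :=
      Finset.sum_congr rfl fun k _ => mul_comm _ _
    rw [hF, hG]
    simp only
    linear_combination ((a ξ * e ξ) * (a η * e η) * c) * hk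
      - ((a η * e η) * (a ξ * e ξ) * c * (η i : ℂ)) * hT
  have e2 : ∑ ξ ∈ Λ, ∑ η ∈ Λ, F η ξ = ∑ ξ ∈ Λ, ∑ η ∈ Λ, F ξ η := by rw [Finset.sum_comm]
  have e3 : ∑ ξ ∈ Λ, ∑ η ∈ Λ, G η ξ = ∑ ξ ∈ Λ, ∑ η ∈ Λ, G ξ η := by rw [Finset.sum_comm]
  have e4 : ∑ ξ ∈ Λ, ∑ η ∈ Λ, (F ξ η + F η ξ)
      = (∑ ξ ∈ Λ, ∑ η ∈ Λ, F ξ η) + ∑ ξ ∈ Λ, ∑ η ∈ Λ, F η ξ := by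
    simp [Finset.sum_add_distrib]
  have e5 : ∑ ξ ∈ Λ, ∑ η ∈ Λ, (G ξ η + G η ξ)
      = (∑ ξ ∈ Λ, ∑ η ∈ Λ, G ξ η) + ∑ ξ ∈ Λ, ∑ η ∈ Λ, G η ξ := by
    simp [Finset.sum_add_distrib]
  linear_combination (e1 - e4 + e5 - e2 + e3) / 2

noncomputable def phL (lam : ℝ) (ξ : Fin 3 → ℝ) : (Fin 3 → ℝ) →L[ℝ] ℂ :=
  ∑ j, (Complex.I * lam * ξ j) • ((Complex.ofRealCLM).comp (ContinuousLinearMap.proj j))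

lemma phL_apply (lam : ℝ) (ξ : Fin 3 → ℝ) (y : Fin 3 → ℝ) :
    phL lam ξ y = Complex.I * lam * ∑ j, (ξ j : ℂ) * (y j : ℂ) := by
  simp only [phL, ContinuousLinearMap.sum_apply, ContinuousLinearMap.smul_apply,
    ContinuousLinearMap.comp_apply, ContinuousLinearMap.proj_apply, Complex.ofRealCLM_apply,
    smul_eq_mul, Finset.mul_sum]
  exact Finset.sum_congr rfl fun j _ => by ring

lemma phL_single (lam : ℝ) (ξ : Fin 3 → ℝ) (j : Fin 3) :
    phL lam ξ (Pi.single j 1) = Complex.I * lam * ξ j := by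
  rw [phL_apply]
  rw [Finset.sum_eq_single j]
  · simp
  · intro k _ hk; simp [Pi.single_apply, hk]
  · simp

noncomputable def expw (lam : ℝ) (ξ : Fin 3 → ℝ) (x : Fin 3 → ℝ) : ℂ :=
  Complex.exp (Complex.I * lam * ∑ j, (ξ j : ℂ) * (x j : ℂ))

lemma hasFDerivAt_expw (lam : ℝ) (ξ : Fin 3 → ℝ) (x : Fin 3 → ℝ) :
    HasFDerivAt (expw lam ξ) (expw lam ξ x • phL lam ξ) x := by
  have h : expw lam ξ = fun y => Complex.exp (phL lam ξ y) := by
    funext y; rw [expw, phL_apply]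
  rw [h]
  have := ((phL lam ξ).hasFDerivAt (x := x)).cexp
  simpa [h] using this

end Aux

/-- A linear combination `W(x) = Σ_{ξ∈Λ} a_ξ B_ξ e^{iλ ξ·x}` of Beltrami waves with
`a_{-ξ} = conj(a_ξ)` is a stationary solution of the Euler equations:
`div(W ⊗ W) = ∇(|W|²/2)`. -/
theorem stmt_5 (Λ : Finset (Fin 3 → ℝ))
    (hΛunit : ∀ ξ ∈ Λ, ∑ k, ξ k ^ 2 = 1) (hΛsym : ∀ ξ ∈ Λ, -ξ ∈ Λ)
    (A : (Fin 3 → ℝ) → Fin 3 → ℝ)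
    (hAunit : ∀ ξ ∈ Λ, ∑ k, A ξ k ^ 2 = 1)
    (hAperp : ∀ ξ ∈ Λ, ∑ k, A ξ k * ξ k = 0)
    (hAeven : ∀ ξ ∈ Λ, A (-ξ) = A ξ)
    (a : (Fin 3 → ℝ) → ℂ) (ha : ∀ ξ ∈ Λ, a (-ξ) = starRingEnd ℂ (a ξ))
    (lam : ℝ)
    (W : (Fin 3 → ℝ) → Fin 3 → ℂ)
    (hW : ∀ x k, W x k = ∑ ξ ∈ Λ,
      a ξ * beltrami ξ (A ξ) k * Complex.exp (Complex.I * (lam : ℂ) * ∑ j, (ξ j : ℂ) * (x j : ℂ))) :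
    ∀ (i : Fin 3) (x : Fin 3 → ℝ),
      ∑ j, pdC j (fun y => W y i * W y j) x =
        pdC i (fun y => (∑ k, W y k ^ 2) / 2) x := by
  intro i x
  classical
  have hW' : ∀ (y : Fin 3 → ℝ) (k : Fin 3),
      W y k = ∑ ξ ∈ Λ, a ξ * beltrami ξ (A ξ) k * expw lam ξ y := fun y k => hW y k
  have hBperp : ∀ ξ ∈ Λ, ∑ j, beltrami ξ (A ξ) j * (ξ j : ℂ) = 0 :=
    fun ξ hξ => beltrami_perp ξ (A ξ) (hAperp ξ hξ)
  have hBkey : ∀ ξ ∈ Λ, ∀ η ∈ Λ, ∀ i' : Fin 3,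
      beltrami ξ (A ξ) i' * (∑ j, (ξ j : ℂ) * beltrami η (A η) j)
        + beltrami η (A η) i' * (∑ j, (η j : ℂ) * beltrami ξ (A ξ) j)
        = ((ξ i' : ℂ) + (η i' : ℂ)) * ∑ k, beltrami ξ (A ξ) k * beltrami η (A η) k :=
    fun ξ hξ η hη i' => key_cross _ _ _ _
      (beltrami_eigen ξ (A ξ) (hΛunit ξ hξ) (hAperp ξ hξ))
      (beltrami_eigen η (A η) (hΛunit η hη) (hAperp η hη)) i'
  set D : Fin 3 → (Fin 3 → ℝ) →L[ℝ] ℂ :=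
    fun k => ∑ ξ ∈ Λ, (a ξ * beltrami ξ (A ξ) k * expw lam ξ x) • phL lam ξ with hD
  have hWd : ∀ k, HasFDerivAt (fun y => W y k) (D k) x := by
    intro k
    have hfun : (fun y => W y k) = fun y => ∑ ξ ∈ Λ, a ξ * beltrami ξ (A ξ) k * expw lam ξ y :=
      funext fun y => hW' y k
    rw [hfun, hD]
    refine HasFDerivAt.fun_sum fun ξ _ => ?_
    have h1 := (hasFDerivAt_expw lam ξ x).const_mul (a ξ * beltrami ξ (A ξ) k)
    simpa [smul_smul, mul_assoc] using h1
  have hDapp : ∀ k j, D k (Pi.single j 1)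
      = ∑ ξ ∈ Λ, a ξ * beltrami ξ (A ξ) k * expw lam ξ x * (Complex.I * lam * ξ j) := by
    intro k j
    rw [hD]
    simp only [ContinuousLinearMap.sum_apply, ContinuousLinearMap.smul_apply, phL_single,
      smul_eq_mul]
  have hL : ∀ j, pdC j (fun y => W y i * W y j) x
      = W x i * D j (Pi.single j 1) + W x j * D i (Pi.single j 1) := by
    intro j
    have h := (hWd i).fun_mul (hWd j)
    rw [pdC, h.fderiv]
    simp
  have hR : pdC i (fun y => (∑ k, W y k ^ 2) / 2) x = ∑ k, W x k * D k (Pi.single i 1) := by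
    have hg : HasFDerivAt (fun y => ∑ k, W y k ^ 2) (∑ k : Fin 3, (W x k • D k + W x k • D k)) x := by
      refine HasFDerivAt.fun_sum fun k _ => ?_
      have h := (hWd k).fun_mul (hWd k)
      simpa [sq] using h
    have heq : (fun y => (∑ k, W y k ^ 2) / 2) = fun y => (2:ℂ)⁻¹ * (∑ k, W y k ^ 2) := by
      funext y; ring
    have h2 := hg.const_mul ((2:ℂ)⁻¹)
    rw [pdC, heq, h2.fderiv]
    simp only [ContinuousLinearMap.smul_apply, ContinuousLinearMap.sum_apply,
      ContinuousLinearMap.add_apply, smul_eq_mul, Finset.mul_sum]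
    refine Finset.sum_congr rfl fun k _ => by ring
  rw [hR]
  have hLsum : ∑ j, pdC j (fun y => W y i * W y j) x
      = ∑ j, (W x i * D j (Pi.single j 1) + W x j * D i (Pi.single j 1)) :=
    Finset.sum_congr rfl fun j _ => hL j
  rw [hLsum]
  simp only [hDapp, hW']
  exact alg_key Λ a (fun ξ => expw lam ξ x) (fun ξ => beltrami ξ (A ξ)) (Complex.I * lam)
    hBperp hBkey i
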